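/- If h : ℝ^d → ℝ is convex and L-Lipschitz, and c : ℝ^d → ℝ^m is C¹ with β-Lipschitz Jacobian, then the composition g = h ∘ c is Lβ-weakly convex. -/

import Mathlib

/-- Quadratic Taylor bound for a map with `β`-Lipschitz derivative. -/
lemma taylor_quadratic_bound {E F : Type*} [NormedAddCommGroup E] [NormedSpace ℝ E]
    [NormedAddCommGroup F] [NormedSpace ℝ F] [CompleteSpace F]
    (c : E → F) (c' : E → (E →L[ℝ] F)) (β : ℝ) (hβ : 0 ≤ β)
    (hc : ∀ x, HasFDerivAt c (c' x) x)
    (hclip : ∀ x y, ‖c' x - c' y‖ ≤ β * ‖x - y‖) (x y : E) :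
    ‖c y - c x - c' x (y - x)‖ ≤ β / 2 * ‖y - x‖ ^ 2 := by
  set v := y - x with hv
  have hc'cont : Continuous c' := by
    rcases le_or_gt β 0 with hβ | hβ
    · have : ∀ a b : E, c' a = c' b := by
        intro a b
        have h1 := hclip a b
        have h2 : β * ‖a - b‖ ≤ 0 := mul_nonpos_of_nonpos_of_nonneg hβ (norm_nonneg _)
        have : ‖c' a - c' b‖ = 0 := le_antisymm (h1.trans h2) (norm_nonneg _)
        exact sub_eq_zero.mp (norm_eq_zero.mp this)
      have : c' = fun _ => c' 0 := funext fun a => this a 0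
      rw [this]; exact continuous_const
    · exact (LipschitzWith.of_dist_le_mul (fun a b => by
        simpa [dist_eq_norm, Real.coe_toNNReal β hβ.le] using hclip a b)
        (K := β.toNNReal)).continuous
  have hpath : ∀ t : ℝ, HasDerivAt (fun t : ℝ => x + t • v) v t := by
    intro t
    simpa using ((hasDerivAt_id t).smul_const v).const_add x
  have hg : ∀ t : ℝ, HasDerivAt (fun t : ℝ => c (x + t • v)) (c' (x + t • v) v) t := by
    intro t
    exact (hc (x + t • v)).comp_hasDerivAt t (hpath t)
  have hintg : Continuous (fun t : ℝ => c' (x + t • v) v) := by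
    have : Continuous (fun t : ℝ => x + t • v) := by continuity
    exact (ContinuousLinearMap.apply ℝ F v).continuous.comp (hc'cont.comp this)
  have hFTC : (∫ t in (0:ℝ)..1, c' (x + t • v) v) = c y - c x := by
    have := intervalIntegral.integral_eq_sub_of_hasDerivAt
      (f := fun t : ℝ => c (x + t • v)) (f' := fun t : ℝ => c' (x + t • v) v)
      (a := 0) (b := 1) (fun t _ => hg t) (hintg.intervalIntegrable 0 1)
    simpa [hv] using this
  have hconst : (∫ t in (0:ℝ)..1, (c' x) v) = c' x v := by simp
  have key : c y - c x - c' x v = ∫ t in (0:ℝ)..1, (c' (x + t • v) v - c' x v) := by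
    rw [intervalIntegral.integral_sub (hintg.intervalIntegrable 0 1)
      (intervalIntegrable_const), hFTC, hconst]
  rw [key]
  have hb : ∀ t ∈ Set.Icc (0:ℝ) 1, ‖c' (x + t • v) v - c' x v‖ ≤ β * ‖v‖ ^ 2 * t := by
    intro t ht
    have h1 : c' (x + t • v) v - c' x v = (c' (x + t • v) - c' x) v := by simp
    rw [h1]
    calc ‖(c' (x + t • v) - c' x) v‖ ≤ ‖c' (x + t • v) - c' x‖ * ‖v‖ :=
          (c' (x + t • v) - c' x).le_opNorm v
      _ ≤ (β * ‖(x + t • v) - x‖) * ‖v‖ := by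
          exact mul_le_mul_of_nonneg_right (hclip _ _) (norm_nonneg _)
      _ = β * ‖v‖ ^ 2 * t := by
          have : ‖(x + t • v) - x‖ = t * ‖v‖ := by
            simp [norm_smul, abs_of_nonneg ht.1]
          rw [this]; ring
  have hIval : (∫ t in (0:ℝ)..1, β * ‖v‖ ^ 2 * t) = β / 2 * ‖v‖ ^ 2 := by
    rw [intervalIntegral.integral_const_mul, integral_id]
    ring
  calc ‖∫ t in (0:ℝ)..1, (c' (x + t • v) v - c' x v)‖
      ≤ |∫ t in (0:ℝ)..1, β * ‖v‖ ^ 2 * t| := by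
        apply intervalIntegral.norm_integral_le_abs_of_norm_le
        · filter_upwards [MeasureTheory.ae_restrict_mem measurableSet_Ioc] with t ht
          rw [Set.uIoc_of_le zero_le_one] at ht
          exact hb t ⟨ht.1.le, ht.2⟩
        · exact (continuous_const.mul continuous_id).intervalIntegrable 0 1
    _ = β / 2 * ‖v‖ ^ 2 := by
        rw [hIval, abs_of_nonneg (by positivity)]

/-- A composition `g = h ∘ c` of a convex `L`-Lipschitz function `h` with a `C¹` map `c`
having `β`-Lipschitz Jacobian is `Lβ`-weakly convex. -/
theorem composite_weakly_convex {d m : ℕ}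
    (h : EuclideanSpace ℝ (Fin m) → ℝ) (L : ℝ) (hL : 0 ≤ L)
    (hconv : ConvexOn ℝ Set.univ h)
    (hlip : ∀ u v, |h u - h v| ≤ L * ‖u - v‖)
    (c : EuclideanSpace ℝ (Fin d) → EuclideanSpace ℝ (Fin m))
    (c' : EuclideanSpace ℝ (Fin d) → (EuclideanSpace ℝ (Fin d) →L[ℝ] EuclideanSpace ℝ (Fin m)))
    (β : ℝ) (hβ : 0 ≤ β)
    (hc : ∀ x, HasFDerivAt c (c' x) x)
    (hclip : ∀ x y, ‖c' x - c' y‖ ≤ β * ‖x - y‖) :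
    ConvexOn ℝ Set.univ (fun x => h (c x) + (L * β) / 2 * ‖x‖ ^ 2) := by
  refine ⟨convex_univ, ?_⟩
  intro x _ y _ a b ha hb hab
  set z := a • x + b • y with hz
  -- key geometric facts
  have hxz : x - z = b • (x - y) := by
    rw [hz]; rw [show (b:ℝ) = 1 - a by linarith]
    module
  have hyz : y - z = a • (y - x) := by
    rw [hz]; rw [show (a:ℝ) = 1 - b by linarith]
    module
  have hcomb : a • (x - z) + b • (y - z) = 0 := by
    rw [hxz, hyz]
    rw [smul_smul, smul_smul, smul_sub, smul_sub]
    abel_nf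
    rw [mul_comm a b]
    simp
  -- Taylor bounds at z
  have tx := taylor_quadratic_bound c c' β hβ hc hclip z x
  have ty := taylor_quadratic_bound c c' β hβ hc hclip z y
  -- the chord estimate
  have chord : ‖a • c x + b • c y - c z‖ ≤ β / 2 * (a * b) * ‖x - y‖ ^ 2 := by
    have hdecomp : a • c x + b • c y - c z
        = a • (c x - c z - c' z (x - z)) + b • (c y - c z - c' z (y - z)) := by
      have hmap : a • (c' z (x - z)) + b • (c' z (y - z)) = 0 := by
        rw [← map_smul, ← map_smul, ← map_add, hcomb, map_zero]
      have h1 : a • (c x - c z - c' z (x - z)) + b • (c y - c z - c' z (y - z))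
          = a • c x + b • c y - (a + b) • c z - (a • (c' z (x - z)) + b • (c' z (y - z))) := by
        module
      rw [h1, hmap, hab]
      module
    rw [hdecomp]
    have hnx : ‖x - z‖ = b * ‖x - y‖ := by
      rw [hxz, norm_smul, Real.norm_eq_abs, abs_of_nonneg hb]
    have hny : ‖y - z‖ = a * ‖y - x‖ := by
      rw [hyz, norm_smul, Real.norm_eq_abs, abs_of_nonneg ha]
    have hxy : ‖y - x‖ = ‖x - y‖ := norm_sub_rev y x
    calc ‖a • (c x - c z - c' z (x - z)) + b • (c y - c z - c' z (y - z))‖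
        ≤ a * ‖c x - c z - c' z (x - z)‖ + b * ‖c y - c z - c' z (y - z)‖ := by
          refine (norm_add_le _ _).trans ?_
          rw [norm_smul, norm_smul, Real.norm_eq_abs, Real.norm_eq_abs,
            abs_of_nonneg ha, abs_of_nonneg hb]
      _ ≤ a * (β / 2 * ‖x - z‖ ^ 2) + b * (β / 2 * ‖y - z‖ ^ 2) := by
          gcongr
      _ = β / 2 * (a * b) * ‖x - y‖ ^ 2 := by
          rw [hnx, hny, hxy]
          have hb1 : b = 1 - a := by linarith
          rw [hb1]; ring
  -- Lipschitz + convexity of h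
  have hstep1 : h (c z) ≤ h (a • c x + b • c y) + L * ‖a • c x + b • c y - c z‖ := by
    have := hlip (c z) (a • c x + b • c y)
    have h2 : h (c z) - h (a • c x + b • c y) ≤ L * ‖c z - (a • c x + b • c y)‖ :=
      (le_abs_self _).trans this
    rw [norm_sub_rev] at h2
    linarith
  have hstep2 : h (a • c x + b • c y) ≤ a * h (c x) + b * h (c y) :=
    hconv.2 (Set.mem_univ _) (Set.mem_univ _) ha hb hab
  -- norm-squared identity (parallelogram-type)
  have hnormsq : ‖z‖ ^ 2 = a * ‖x‖ ^ 2 + b * ‖y‖ ^ 2 - a * b * ‖x - y‖ ^ 2 := by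
    have e1 : ‖z‖ ^ 2 = a ^ 2 * ‖x‖ ^ 2 + 2 * (a * b) * inner ℝ x y + b ^ 2 * ‖y‖ ^ 2 := by
      rw [hz, norm_add_sq_real, norm_smul, norm_smul, real_inner_smul_left,
        real_inner_smul_right, Real.norm_eq_abs, Real.norm_eq_abs,
        abs_of_nonneg ha, abs_of_nonneg hb]
      ring
    have e2 : ‖x - y‖ ^ 2 = ‖x‖ ^ 2 - 2 * inner ℝ x y + ‖y‖ ^ 2 := norm_sub_sq_real x y
    rw [e1, e2]
    have ha2 : a = 1 - b := by linarith
    rw [ha2]; ring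
  -- put everything together
  have hLchord : L * ‖a • c x + b • c y - c z‖ ≤ L * (β / 2 * (a * b) * ‖x - y‖ ^ 2) :=
    mul_le_mul_of_nonneg_left chord hL
  simp only
  calc h (c z) + L * β / 2 * ‖z‖ ^ 2
      ≤ a * h (c x) + b * h (c y) + L * (β / 2 * (a * b) * ‖x - y‖ ^ 2)
        + L * β / 2 * (a * ‖x‖ ^ 2 + b * ‖y‖ ^ 2 - a * b * ‖x - y‖ ^ 2) := by
        rw [hnormsq]; linarith
    _ = a * (h (c x) + L * β / 2 * ‖x‖ ^ 2) + b * (h (c y) + L * β / 2 * ‖y‖ ^ 2) := by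
        ring
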